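/- In the Artin-Schreier tower over F_p, for i ≥ 0 let m be the order of c_i modulo the subgroup L_{i-1}ˣ (i.e., the least n ≥ 1 with c_i^n ∈ L_{i-1}). Then the multiplicative order of c_i satisfies O(c_i) = m · O(a_{i-1}). -/

import Mathlib

open Polynomial Finset

namespace ASTaux

variable (p : ℕ) [Fact p.Prime]

theorem sum_zmod_pow : ∑ t : ZMod p, t ^ (p-1) = -1 := by
  have hp := (Fact.out : p.Prime)
  classical
  rw [← Finset.sum_subset (Finset.subset_univ ({0}ᶜ : Finset (ZMod p)))]
  · rw [Finset.sum_congr rfl (fun t ht => ZMod.pow_card_sub_one_eq_one (by simpa using ht))]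
    simp only [Finset.sum_const, nsmul_one]
    rw [Finset.card_compl, Finset.card_singleton, ZMod.card p, Nat.cast_sub hp.one_le,
      Nat.cast_one, ZMod.natCast_self, zero_sub]
  · intro t _ ht
    simp only [Finset.mem_compl, Finset.mem_singleton, not_not] at ht
    subst ht
    exact zero_pow (by have := hp.one_lt; omega)

theorem prod_zmod_X_sub_C : ∏ t : ZMod p, (X - C t) = X ^ p - X := by
  have hp := (Fact.out : p.Prime)
  have h1 : (1:ℕ) < p := hp.one_lt
  have hq : Fintype.card (ZMod p) = p := ZMod.card p
  have hroots : (X ^ p - X : (ZMod p)[X]).roots = Finset.univ.val := by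
    have := FiniteField.roots_X_pow_card_sub_X (ZMod p)
    rwa [hq] at this
  have hdeg : (X ^ p - X : (ZMod p)[X]).natDegree = p :=
    FiniteField.X_pow_card_sub_X_natDegree_eq (ZMod p) h1
  have hmon : (X ^ p - X : (ZMod p)[X]).Monic := by
    apply Polynomial.monic_X_pow_sub
    simpa using h1
  have := Polynomial.prod_multiset_X_sub_C_of_monic_of_roots_card_eq hmon
    (by rw [hroots, hdeg]; simpa using hq)
  rw [hroots] at this
  rw [← this]
  rfl

variable {B : Type*} [CommRing B] [Algebra (ZMod p) B]

theorem prod_add_eq (x : B) : ∏ t : ZMod p, (x + algebraMap (ZMod p) B t) = x ^ p - x := by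
  have h := prod_zmod_X_sub_C p
  have h2 := congrArg (Polynomial.aeval x) h
  simp only [map_prod, map_sub, map_pow, Polynomial.aeval_X, Polynomial.aeval_C] at h2
  rw [← h2]
  exact Fintype.prod_equiv (Equiv.neg (ZMod p)) _ _ (by intro t; simp [sub_eq_add_neg])

theorem sum_add_pow_eq (x : B) :
    ∑ t : ZMod p, (x + algebraMap (ZMod p) B t) ^ (p - 1) = -1 := by
  have hp := (Fact.out : p.Prime)
  have hrange : p - 1 + 1 = p := Nat.succ_pred_eq_of_pos hp.pos
  have key : ∀ t : ZMod p, (x + algebraMap (ZMod p) B t) ^ (p - 1) =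
      ∑ k ∈ Finset.range (p-1+1), x ^ k * algebraMap (ZMod p) B (t ^ (p - 1 - k)) * (p-1).choose k := by
    intro t
    rw [add_pow]
    exact Finset.sum_congr rfl (fun k _ => by rw [map_pow])
  rw [Finset.sum_congr rfl (fun t _ => key t), Finset.sum_comm]
  have inner : ∀ k ∈ Finset.range (p-1+1), (∑ t : ZMod p, x ^ k * algebraMap (ZMod p) B (t ^ (p-1-k)) * (p-1).choose k)
      = if k = 0 then (-1 : B) else 0 := by
    intro k hk
    rw [Finset.mem_range, hrange] at hk
    have : (∑ t : ZMod p, x ^ k * algebraMap (ZMod p) B (t ^ (p-1-k)) * (p-1).choose k)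
        = x ^ k * algebraMap (ZMod p) B (∑ t : ZMod p, t ^ (p-1-k)) * (p-1).choose k := by
      rw [map_sum, Finset.mul_sum, Finset.sum_mul]
    rw [this]
    by_cases hk0 : k = 0
    · subst hk0
      rw [if_pos rfl]
      simp [sum_zmod_pow p]
    · rw [if_neg hk0]
      have hlt : p - 1 - k < Fintype.card (ZMod p) - 1 := by
        rw [ZMod.card p]; omega
      rw [FiniteField.sum_pow_lt_card_sub_one (ZMod p) _ hlt]
      simp
  rw [Finset.sum_congr rfl inner, Finset.sum_ite_eq' (Finset.range (p-1+1)) 0]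
  simp

/-- helper: reindexing sums over `range (a*b)` -/
theorem sum_range_mul_eq {M : Type*} [AddCommMonoid M] (f : ℕ → M) (a b : ℕ) :
    ∑ k ∈ Finset.range (a*b), f k = ∑ v ∈ Finset.range b, ∑ u ∈ Finset.range a, f (a*v+u) := by
  induction b with
  | zero => simp
  | succ b ih =>
    rw [Nat.mul_succ, Finset.sum_range_add, ih, Finset.sum_range_succ]

end ASTaux

namespace AST

open ASTaux

variable (p : ℕ) [Fact p.Prime] (c : ℕ → AlgebraicClosure (ZMod p))

local notation "Ω" => AlgebraicClosure (ZMod p)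

/-- a_{n-1} -/
noncomputable def A (n : ℕ) : Ω := (∏ j ∈ Finset.range n, c j) ^ (p - 1)

/-- L_{n-1} -/
noncomputable def L (n : ℕ) : Subalgebra (ZMod p) Ω := Algebra.adjoin (ZMod p) {x | ∃ j < n, x = c j}

/-- fixed points of the s-th power of Frobenius, as a subalgebra -/
noncomputable def M (s : ℕ) : Subalgebra (ZMod p) Ω where
  carrier := {x | x ^ p ^ s = x}
  add_mem' := by
    intro x y hx hy
    simp only [Set.mem_setOf_eq] at *
    rw [add_pow_char_pow, hx, hy]
  mul_mem' := by
    intro x y hx hy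
    simp only [Set.mem_setOf_eq] at *
    rw [mul_pow, hx, hy]
  one_mem' := by simp
  zero_mem' := by
    have : p ^ s ≠ 0 := Nat.pos_iff_ne_zero.mp (pow_pos (Fact.out : p.Prime).pos s)
    simp [zero_pow this]
  algebraMap_mem' := by
    intro r
    simp only [Set.mem_setOf_eq]
    rw [← map_pow]
    congr 1
    induction s with
    | zero => simp
    | succ s ih => rw [pow_succ, pow_mul, ih, ZMod.pow_card]

theorem mem_M_iff {s : ℕ} {x : Ω} : x ∈ M p s ↔ x ^ p ^ s = x := Iff.rfl

theorem M_pow_fix {s : ℕ} {x : Ω} (h : x ^ p ^ s = x) (k : ℕ) : x ^ p ^ (s*k) = x := by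
  induction k with
  | zero => simp
  | succ k ih => rw [Nat.mul_succ, pow_add, pow_mul, ih, h]

/-- the fixed point set of Frobenius^s is finite, given by a finset of cardinality `p^s`. -/
theorem M_finset (s : ℕ) (hs : s ≠ 0) :
    ∃ F : Finset Ω, (∀ x : Ω, x ∈ F ↔ x ^ p ^ s = x) ∧ F.card = p ^ s := by
  classical
  have hp := (Fact.out : p.Prime)
  have h1 : 1 < p ^ s := Nat.one_lt_pow hs hp.one_lt
  set f : Polynomial Ω := X ^ (p ^ s) - X with hf
  have hfne : f ≠ 0 := FiniteField.X_pow_card_sub_X_ne_zero Ω h1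
  have hdeg : f.natDegree = p ^ s := FiniteField.X_pow_card_sub_X_natDegree_eq Ω h1
  have hsep : f.Separable := galois_poly_separable p (p ^ s) (dvd_pow_self p hs)
  have hsplits : f.Splits := IsAlgClosed.splits f
  have hcard : Multiset.card f.roots = p ^ s := by
    rw [← hdeg]
    exact (Polynomial.splits_iff_card_roots).mp hsplits
  refine ⟨f.roots.toFinset, ?_, ?_⟩
  · intro x
    rw [Multiset.mem_toFinset, Polynomial.mem_roots hfne]
    simp only [Polynomial.IsRoot, hf, Polynomial.eval_sub, Polynomial.eval_pow, Polynomial.eval_X]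
    rw [sub_eq_zero]
  · rw [Multiset.toFinset_card_of_nodup (Polynomial.nodup_roots hsep)]
    exact hcard


variable {p c}

theorem c_ne_zero (hc : ∀ i, c i ^ p - c i = A p c i) (n : ℕ) : c n ≠ 0 := by
  induction n using Nat.strong_induction_on with
  | _ n ih =>
    intro h0
    have hA : A p c n ≠ 0 := by
      apply pow_ne_zero
      exact Finset.prod_ne_zero_iff.mpr (fun j hj => ih j (Finset.mem_range.mp hj))
    have := hc n
    rw [h0] at this
    have hp := (Fact.out : p.Prime)
    rw [zero_pow (Nat.pos_iff_ne_zero.mp hp.pos), sub_zero] at this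
    exact hA this.symm

theorem A_ne_zero (hc : ∀ i, c i ^ p - c i = A p c i) (n : ℕ) : A p c n ≠ 0 :=
  pow_ne_zero _ (Finset.prod_ne_zero_iff.mpr (fun j hj => c_ne_zero hc j))

theorem frob_pow (hc : ∀ i, c i ^ p - c i = A p c i) (n k : ℕ) :
    c n ^ p ^ k = c n + ∑ j ∈ Finset.range k, A p c n ^ p ^ j := by
  induction k with
  | zero => simp
  | succ k ih =>
    have hcn : c n ^ p = c n + A p c n := by
      have := hc n
      linear_combination this
    have hS : (∑ j ∈ Finset.range k, A p c n ^ p ^ j) ^ p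
        = ∑ j ∈ Finset.range k, A p c n ^ p ^ (j+1) := by
      rw [← frobenius_def, map_sum]
      exact Finset.sum_congr rfl (fun j _ => by rw [frobenius_def, ← pow_mul, ← pow_succ])
    rw [pow_succ, pow_mul, ih, add_pow_char, hcn, hS, Finset.sum_range_succ']
    rw [pow_zero, pow_one]
    ring


theorem sum_frob_eq (s : ℕ) {x : Ω} (hx : x ^ p ^ s = x) (v : ℕ) :
    ∑ j ∈ Finset.range (s*v), x ^ p ^ j = (v:Ω) * ∑ j ∈ Finset.range s, x ^ p ^ j := by
  induction v with
  | zero => simp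
  | succ v ih =>
    rw [Nat.mul_succ, Finset.sum_range_add, ih]
    have : ∀ k ∈ Finset.range s, x ^ p ^ (s*v + k) = x ^ p ^ k := by
      intro k _
      rw [pow_add, pow_mul, M_pow_fix p hx]
    rw [Finset.sum_congr rfl this]
    push_cast
    ring

theorem orbit_eq (hc : ∀ i, c i ^ p - c i = A p c i) {n s : ℕ}
    (hA : A p c n ^ p ^ s = A p c n) (v : ℕ) :
    c n ^ (p ^ s) ^ v = c n + (v:Ω) * ∑ j ∈ Finset.range s, A p c n ^ p ^ j := by
  rw [← pow_mul, frob_pow hc n (s*v), sum_frob_eq s hA v]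

theorem L_mono {n n' : ℕ} (h : n ≤ n') : L p c n ≤ L p c n' := by
  apply Algebra.adjoin_mono
  rintro x ⟨j, hj, rfl⟩
  exact ⟨j, lt_of_lt_of_le hj h, rfl⟩

theorem cj_mem_L {j n : ℕ} (h : j < n) : c j ∈ L p c n :=
  Algebra.subset_adjoin ⟨j, h, rfl⟩

theorem A_mem_L (n : ℕ) : A p c n ∈ L p c n := by
  apply pow_mem
  exact Subalgebra.prod_mem _ (fun j hj => cj_mem_L (Finset.mem_range.mp hj))

/-- linear independence of powers of `c n` over `L n` -/
theorem indep (hc : ∀ i, c i ^ p - c i = A p c i) {n s : ℕ} (hs : s ≠ 0)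
    (hA : A p c n ^ p ^ s = A p c n)
    (hT : (∑ j ∈ Finset.range s, A p c n ^ p ^ j) ≠ 0)
    (l : Fin p → Ω) (hl : ∀ k, (l k) ^ p ^ s = l k)
    (h0 : (∑ k : Fin p, l k * c n ^ (k:ℕ)) = 0) : ∀ k, l k = 0 := by
  classical
  have hp := (Fact.out : p.Prime)
  set T := ∑ j ∈ Finset.range s, A p c n ^ p ^ j with hTdef
  by_contra hcon
  push_neg at hcon
  obtain ⟨k0, hk0⟩ := hcon
  set f : Polynomial Ω := ∑ k : Fin p, Polynomial.C (l k) * Polynomial.X ^ (k:ℕ) with hf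
  have hcoeff : ∀ j : Fin p, f.coeff (j:ℕ) = l j := by
    intro j
    rw [hf, Polynomial.finset_sum_coeff]
    rw [Finset.sum_congr rfl (fun k _ => by
      rw [Polynomial.coeff_C_mul, Polynomial.coeff_X_pow])]
    rw [Finset.sum_eq_single j]
    · simp
    · intro b _ hb
      rw [if_neg, mul_zero]
      exact fun hh => hb (Fin.ext hh.symm)
    · simp
  have hfne : f ≠ 0 := fun h => hk0 (by rw [← hcoeff k0, h, Polynomial.coeff_zero])
  have hdeg : f.natDegree ≤ p - 1 := by
    apply Polynomial.natDegree_sum_le_of_forall_le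
    intro k _
    refine le_trans (Polynomial.natDegree_C_mul_le _ _) ?_
    rw [Polynomial.natDegree_X_pow]
    omega
  have hroot : ∀ v : ℕ, f.eval (c n + (v:Ω) * T) = 0 := by
    intro v
    have h1 : iterateFrobenius Ω p (s*v) (∑ k : Fin p, l k * c n ^ (k:ℕ)) = 0 := by
      rw [h0, map_zero]
    rw [map_sum] at h1
    have h2 : ∀ k : Fin p, iterateFrobenius Ω p (s*v) (l k * c n ^ (k:ℕ))
        = l k * (c n + (v:Ω)*T) ^ (k:ℕ) := by
      intro k
      rw [map_mul, map_pow, iterateFrobenius_def, iterateFrobenius_def, M_pow_fix p (hl k)]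
      congr 2
      rw [pow_mul, orbit_eq hc hA v, hTdef]
    have heval : f.eval (c n + (v:Ω) * T) = ∑ k : Fin p, l k * (c n + (v:Ω)*T) ^ (k:ℕ) := by
      rw [hf, Polynomial.eval_finset_sum]
      simp
    rw [heval,
      show (∑ k : Fin p, l k * (c n + (v:Ω)*T) ^ (k:ℕ))
        = ∑ k : Fin p, iterateFrobenius Ω p (s*v) (l k * c n ^ (k:ℕ)) from
        Finset.sum_congr rfl fun k _ => (h2 k).symm]
    exact h1
  set R : Finset Ω := (Finset.range p).image (fun v : ℕ => c n + (v:Ω) * T) with hR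
  have hRsub : R ⊆ f.roots.toFinset := by
    intro x hx
    rw [hR, Finset.mem_image] at hx
    obtain ⟨v, hv, rfl⟩ := hx
    rw [Multiset.mem_toFinset, Polynomial.mem_roots hfne]
    exact hroot v
  have hRcard : R.card = p := by
    rw [hR, Finset.card_image_of_injOn, Finset.card_range]
    intro v hv w hw h
    simp only [Finset.coe_range, Set.mem_Iio] at hv hw
    have h3 : (v:Ω) * T = (w:Ω) * T := add_left_cancel h
    have h4 : (v:Ω) = (w:Ω) := mul_right_cancel₀ hT h3
    exact CharP.natCast_injOn_Iio Ω p hv hw h4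
  have hge : p ≤ f.natDegree := by
    calc p = R.card := hRcard.symm
    _ ≤ f.roots.toFinset.card := Finset.card_le_card hRsub
    _ ≤ Multiset.card f.roots := Multiset.toFinset_card_le _
    _ ≤ f.natDegree := Polynomial.card_roots' f
  have := hp.pos
  omega


theorem main_ind (hc : ∀ i, c i ^ p - c i = A p c i) (n : ℕ) :
    (∀ x : Ω, x ∈ L p c n ↔ x ^ p ^ p ^ n = x) ∧
    (∑ k ∈ Finset.range (p ^ n), A p c n ^ p ^ k) = (-1:Ω) ^ n := by
  classical
  have hp := (Fact.out : p.Prime)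
  induction n with
  | zero =>
    constructor
    · intro x
      constructor
      · intro hx
        have hle : L p c 0 ≤ M p 1 := by
          apply Algebra.adjoin_le
          rintro y ⟨j, hj, rfl⟩
          omega
        have := hle hx
        rw [mem_M_iff] at this
        simpa using this
      · intro hx
        obtain ⟨F, hF, hFcard⟩ := M_finset p 1 one_ne_zero
        set G : Finset Ω := (Finset.univ : Finset (ZMod p)).image (algebraMap (ZMod p) Ω) with hG
        have hGsub : G ⊆ F := by
          intro y hy
          rw [hG, Finset.mem_image] at hy
          obtain ⟨r, _, rfl⟩ := hy
          rw [hF, ← map_pow]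
          congr 1
          simpa using ZMod.pow_card r
        have hGcard : G.card = p := by
          rw [hG, Finset.card_image_of_injective _ (algebraMap (ZMod p) Ω).injective,
            Finset.card_univ, ZMod.card]
        have hGF : G = F := Finset.eq_of_subset_of_card_le hGsub (by rw [hFcard, hGcard]; simp)
        have hxF : x ∈ F := by rw [hF]; simpa using hx
        rw [← hGF, hG, Finset.mem_image] at hxF
        obtain ⟨r, _, rfl⟩ := hxF
        exact Subalgebra.algebraMap_mem _ r
    · simp [A]
  | succ n ih =>
    obtain ⟨ihL, ihT⟩ := ih
    set s := p ^ n with hs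
    have hs0 : s ≠ 0 := Nat.pos_iff_ne_zero.mp (pow_pos hp.pos n)
    set T : Ω := ∑ j ∈ Finset.range s, A p c n ^ p ^ j with hTdef
    have hAfix : A p c n ^ p ^ s = A p c n := (ihL _).mp (A_mem_L n)
    have hTval : T = (-1:Ω) ^ n := ihT
    have hT0 : T ≠ 0 := by
      rw [hTval]
      exact pow_ne_zero _ (neg_ne_zero.mpr one_ne_zero)
    have hsucc : p ^ (n+1) = s * p := by rw [hs, pow_succ]
    -- L (n+1) is contained in the fixed points of Frobenius^(p^(n+1))
    have hup : L p c (n+1) ≤ M p (p ^ (n+1)) := by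
      apply Algebra.adjoin_le
      rintro y ⟨j, hj, rfl⟩
      show c j ^ p ^ (p ^ (n+1)) = c j
      rw [hsucc]
      rcases Nat.lt_succ_iff_lt_or_eq.mp hj with hj' | rfl
      · exact M_pow_fix p ((ihL _).mp (cj_mem_L hj')) p
      · have := orbit_eq hc hAfix p
        rw [← pow_mul] at this
        rw [this, CharP.cast_eq_zero, zero_mul, add_zero]
    -- counting
    obtain ⟨F, hF, hFcard⟩ := M_finset p s hs0
    obtain ⟨G, hG, hGcard⟩ := M_finset p (p^(n+1)) (Nat.pos_iff_ne_zero.mp (pow_pos hp.pos _))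
    have hmemL : ∀ x : Ω, x ∈ L p c (n+1) ↔ x ^ p ^ p ^ (n+1) = x := by
      have hgdef : ∀ l : Fin p → {x : Ω // x ∈ F}, True := fun _ => trivial
      set g : (Fin p → {x : Ω // x ∈ F}) → Ω :=
        fun l => ∑ k : Fin p, (l k : Ω) * c n ^ (k:ℕ) with hg
      have hginj : Function.Injective g := by
        intro l1 l2 h
        have hdiff : ∀ k : Fin p, ((l1 k : Ω) - (l2 k : Ω)) = 0 := by
          apply indep hc hs0 hAfix (by rw [← hTdef]; exact hT0)
          · intro k
            rw [sub_pow_char_pow]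
            have e1 : (l1 k : Ω) ^ p ^ s = (l1 k : Ω) := (hF _).mp (l1 k).2
            have e2 : (l2 k : Ω) ^ p ^ s = (l2 k : Ω) := (hF _).mp (l2 k).2
            rw [e1, e2]
          · rw [hg] at h
            simp only [← Finset.sum_sub_distrib, ← sub_mul] at h ⊢
            rw [show (∑ k : Fin p, ((l1 k : Ω) - (l2 k : Ω)) * c n ^ (k:ℕ))
              = (∑ k : Fin p, (l1 k : Ω) * c n ^ (k:ℕ)) - ∑ k : Fin p, (l2 k : Ω) * c n ^ (k:ℕ) by
                rw [← Finset.sum_sub_distrib]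
                exact Finset.sum_congr rfl fun k _ => by ring]
            rw [h, sub_self]
        funext k
        have := hdiff k
        rw [sub_eq_zero] at this
        exact Subtype.ext this
      have hgmem : ∀ l, g l ∈ L p c (n+1) := by
        intro l
        apply Subalgebra.sum_mem
        intro k _
        apply Subalgebra.mul_mem
        · apply L_mono (Nat.le_succ n)
          rw [show ((l k : Ω) ∈ L p c n) ↔ _ from ihL _]
          exact (hF _).mp (l k).2
        · exact pow_mem (cj_mem_L (Nat.lt_succ_self n)) _
      have himsub : (Finset.univ.image g) ⊆ G := by
        intro y hy
        rw [Finset.mem_image] at hy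
        obtain ⟨l, _, rfl⟩ := hy
        rw [hG]
        have := hup (hgmem l)
        rwa [mem_M_iff] at this
      have himcard : (Finset.univ.image g).card = G.card := by
        rw [Finset.card_image_of_injective _ hginj, Finset.card_univ, Fintype.card_fun,
          Fintype.card_coe, hFcard, Fintype.card_fin, hGcard, hsucc, ← pow_mul]
      have himeq : Finset.univ.image g = G :=
        Finset.eq_of_subset_of_card_le himsub (le_of_eq himcard.symm)
      intro x
      constructor
      · intro hx
        have := hup hx
        rwa [mem_M_iff] at this
      · intro hx
        have hxG : x ∈ G := by rw [hG]; exact hx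
        rw [← himeq, Finset.mem_image] at hxG
        obtain ⟨l, _, rfl⟩ := hxG
        exact hgmem l
    refine ⟨hmemL, ?_⟩
    -- the trace sum
    have hA' : A p c (n+1) = A p c n * c n ^ (p-1) := by
      rw [A, A, Finset.prod_range_succ, mul_pow]
    rw [hsucc, sum_range_mul_eq _ s p]
    have hterm : ∀ v ∈ Finset.range p, ∀ u ∈ Finset.range s,
        A p c (n+1) ^ p ^ (s*v+u) = (A p c n * (c n + (v:Ω)*T) ^ (p-1)) ^ p ^ u := by
      intro v _ u _
      rw [pow_add, pow_mul]
      congr 1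
      rw [hA', mul_pow, M_pow_fix p hAfix v]
      congr 1
      rw [← pow_mul, mul_comm (p-1) (p ^ (s*v)), pow_mul, pow_mul p s v,
        orbit_eq hc hAfix v, ← hTdef]
    rw [Finset.sum_congr rfl (fun v hv => Finset.sum_congr rfl (fun u hu => hterm v hv u hu))]
    rw [Finset.sum_comm]
    have hswap : ∀ u ∈ Finset.range s,
        (∑ v ∈ Finset.range p, (A p c n * (c n + (v:Ω)*T) ^ (p-1)) ^ p ^ u)
        = ((-1 : Ω) * A p c n) ^ p ^ u := by
      intro u _
      rw [show (∑ v ∈ Finset.range p, (A p c n * (c n + (v:Ω)*T) ^ (p-1)) ^ p ^ u)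
          = iterateFrobenius Ω p u (∑ v ∈ Finset.range p, A p c n * (c n + (v:Ω)*T) ^ (p-1)) by
        rw [map_sum]
        exact Finset.sum_congr rfl fun v _ => by rw [iterateFrobenius_def]]
      rw [← Finset.mul_sum]
      have hre : (∑ v ∈ Finset.range p, (c n + (v:Ω)*T) ^ (p-1))
          = ∑ t : ZMod p, (c n + algebraMap (ZMod p) Ω t) ^ (p-1) := by
        set τ : ZMod p := (-1) ^ n with hτ
        have hτT : ∀ v : ℕ, (v:Ω) * T = algebraMap (ZMod p) Ω ((v : ZMod p) * τ) := by
          intro v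
          rw [map_mul, map_natCast, hTval, hτ, map_pow, map_neg, map_one]
        have hττ : τ * τ = 1 := by
          rw [hτ, ← pow_add, ← two_mul, pow_mul, neg_one_sq, one_pow]
        apply Finset.sum_nbij' (fun v : ℕ => (v : ZMod p) * τ)
          (fun t : ZMod p => (t * τ).val)
        · intro a _; exact Finset.mem_univ _
        · intro t _
          rw [Finset.mem_range]
          exact ZMod.val_lt _
        · intro v hv
          rw [Finset.mem_range] at hv
          rw [mul_assoc, hττ, mul_one, ZMod.val_natCast, Nat.mod_eq_of_lt hv]
        · intro t _
          rw [ZMod.natCast_val, ZMod.cast_id, mul_assoc, hττ, mul_one]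
        · intro v hv
          rw [hτT v]
      rw [hre, sum_add_pow_eq p (c n), mul_comm, iterateFrobenius_def]
    rw [Finset.sum_congr rfl hswap]
    have : ∀ u ∈ Finset.range s, ((-1:Ω) * A p c n) ^ p ^ u = (-1) * (A p c n) ^ p ^ u := by
      intro u _
      rw [show ((-1:Ω) * A p c n) ^ p ^ u = iterateFrobenius Ω p u ((-1) * A p c n) by
        rw [iterateFrobenius_def]]
      rw [neg_one_mul, map_neg, iterateFrobenius_def, neg_one_mul]
    rw [Finset.sum_congr rfl this, ← Finset.mul_sum, ← hTdef, hTval]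
    ring

theorem main (hc : ∀ i, c i ^ p - c i = A p c i) (i m : ℕ) (hm : 0 < m)
    (hmem : c i ^ m ∈ L p c i)
    (hmin : ∀ n : ℕ, 0 < n → c i ^ n ∈ L p c i → m ≤ n) :
    orderOf (c i) = m * orderOf (A p c i) := by
  classical
  have hp := (Fact.out : p.Prime)
  obtain ⟨hK, hTv⟩ := main_ind hc i
  set s : ℕ := p ^ i with hs
  have hs0 : s ≠ 0 := Nat.pos_iff_ne_zero.mp (pow_pos hp.pos i)
  set q : ℕ := p ^ s with hq
  have hq1 : 1 < q := Nat.one_lt_pow hs0 hp.one_lt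
  set T : Ω := ∑ j ∈ Finset.range s, A p c i ^ p ^ j with hTdef
  have hAfix : A p c i ^ p ^ s = A p c i := (hK _).mp (A_mem_L i)
  have horb : ∀ v : ℕ, c i ^ q ^ v = c i + (v:Ω) * T := fun v => orbit_eq hc hAfix v
  have hc0 : c i ≠ 0 := c_ne_zero hc i
  have hA0 : A p c i ≠ 0 := A_ne_zero hc i
  have hqp : c i ^ q ^ p = c i := by
    rw [horb p, CharP.cast_eq_zero, zero_mul, add_zero]
  have hfin : c i ^ (q ^ p - 1) = 1 := by
    have h := hqp
    have h1 : 1 < q ^ p := Nat.one_lt_pow (Nat.pos_iff_ne_zero.mp hp.pos) hq1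
    rw [show q ^ p = (q ^ p - 1) + 1 by omega, pow_succ] at h
    exact mul_right_cancel₀ hc0 (h.trans (one_mul _).symm)
  have hfo : IsOfFinOrder (c i) :=
    isOfFinOrder_iff_pow_eq_one.mpr ⟨q ^ p - 1, by
      have h1 : 1 < q ^ p := Nat.one_lt_pow (Nat.pos_iff_ne_zero.mp hp.pos) hq1
      omega, hfin⟩
  set N : ℕ := orderOf (c i) with hN
  have hN0 : 0 < N := hfo.orderOf_pos
  set e : ℕ := ∑ v ∈ Finset.range p, q ^ v with he
  have he0 : e ≠ 0 := by
    have : 0 < e := by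
      rw [he]
      apply Finset.sum_pos (fun v _ => pow_pos (by omega) v)
      exact ⟨0, Finset.mem_range.mpr hp.pos⟩
    omega
  -- A = c ^ e
  have hAe : c i ^ e = A p c i := by
    rw [he, ← Finset.prod_pow_eq_pow_sum]
    rw [Finset.prod_congr rfl (fun v _ => horb v)]
    have hre : (∏ v ∈ Finset.range p, (c i + (v:Ω)*T))
        = ∏ t : ZMod p, (c i + algebraMap (ZMod p) Ω t) := by
      set τ : ZMod p := (-1) ^ i with hτ
      have hτT : ∀ v : ℕ, (v:Ω) * T = algebraMap (ZMod p) Ω ((v : ZMod p) * τ) := by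
        intro v
        rw [map_mul, map_natCast, hTv, hτ, map_pow, map_neg, map_one]
      have hττ : τ * τ = 1 := by
        rw [hτ, ← pow_add, ← two_mul, pow_mul, neg_one_sq, one_pow]
      apply Finset.prod_nbij' (fun v : ℕ => (v : ZMod p) * τ)
        (fun t : ZMod p => (t * τ).val)
      · intro a _; exact Finset.mem_univ _
      · intro t _
        rw [Finset.mem_range]
        exact ZMod.val_lt _
      · intro v hv
        rw [Finset.mem_range] at hv
        rw [mul_assoc, hττ, mul_one, ZMod.val_natCast, Nat.mod_eq_of_lt hv]
      · intro t _
        rw [ZMod.natCast_val, ZMod.cast_id, mul_assoc, hττ, mul_one]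
      · intro v hv
        rw [hτT v]
    rw [hre, prod_add_eq p (c i)]
    exact hc i
  have hAq : A p c i ^ (q - 1) = 1 := by
    have h := hAfix
    rw [← hq] at h
    rw [show q = (q - 1) + 1 by omega, pow_succ] at h
    exact mul_right_cancel₀ hA0 (h.trans (one_mul _).symm)
  have hNdvd : N ∣ e * (q - 1) := by
    apply orderOf_dvd_of_pow_eq_one
    rw [pow_mul, hAe, hAq]
  set d0 : ℕ := orderOf (c i ^ (q-1)) with hd0def
  have hd0 : d0 = N / Nat.gcd N (q-1) := orderOf_pow' _ (by omega)
  have hd0pos : 0 < d0 := (hfo.pow).orderOf_pos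
  have memiff : ∀ n : ℕ, (c i ^ n ∈ L p c i ↔ d0 ∣ n) := by
    intro n
    rw [hK]
    have h1 : (c i ^ n) ^ q = c i ^ n ↔ (c i ^ n) ^ (q - 1) = 1 := by
      constructor
      · intro h
        rw [show q = (q - 1) + 1 by omega, pow_succ] at h
        exact mul_right_cancel₀ (pow_ne_zero n hc0) (h.trans (one_mul _).symm)
      · intro h
        rw [show q = (q - 1) + 1 by omega, pow_succ, h, one_mul]
    rw [h1, show (c i ^ n) ^ (q-1) = (c i ^ (q-1)) ^ n by
      rw [← pow_mul, ← pow_mul, mul_comm]]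
    exact orderOf_dvd_iff_pow_eq_one.symm
  have hm_eq : m = d0 :=
    le_antisymm (hmin d0 hd0pos ((memiff d0).mpr dvd_rfl))
      (Nat.le_of_dvd hm ((memiff m).mp hmem))
  have hordA : orderOf (A p c i) = N / Nat.gcd N e := by
    rw [← hAe]
    exact orderOf_pow' _ he0
  -- coprimality
  have hcop : Nat.Coprime (q - 1) e := by
    set d : ℕ := Nat.gcd (q-1) e with hd
    have hsum : e = (∑ v ∈ Finset.range p, (q ^ v - 1)) + p := by
      rw [he, Finset.sum_congr rfl (fun v _ => show q ^ v = (q ^ v - 1) + 1 by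
        have : 0 < q ^ v := pow_pos (by omega) v
        omega)]
      rw [Finset.sum_add_distrib, Finset.sum_const, Finset.card_range, smul_eq_mul, mul_one]
    have h1 : (q - 1) ∣ ∑ v ∈ Finset.range p, (q ^ v - 1) :=
      Finset.dvd_sum (fun v _ => by simpa using Nat.sub_dvd_pow_sub_pow q 1 v)
    have hdp : d ∣ p := by
      have h2 : d ∣ e - ∑ v ∈ Finset.range p, (q ^ v - 1) :=
        Nat.dvd_sub (Nat.gcd_dvd_right _ _) (dvd_trans (Nat.gcd_dvd_left _ _) h1)
      rwa [hsum, Nat.add_sub_cancel_left] at h2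
    rcases (Nat.Prime.eq_one_or_self_of_dvd hp d hdp) with h | h
    · exact h
    · exfalso
      have hpq : p ∣ q := by rw [hq]; exact dvd_pow_self p hs0
      have hpq1 : p ∣ q - 1 := h ▸ Nat.gcd_dvd_left _ _
      have : p ∣ 1 := by
        have := Nat.dvd_sub hpq hpq1
        rwa [Nat.sub_sub_self (by omega)] at this
      have h4 := Nat.le_of_dvd one_pos this
      have h5 := hp.two_le
      omega
  set g1 : ℕ := Nat.gcd N (q-1) with hg1
  set g2 : ℕ := Nat.gcd N e with hg2
  have hg1pos : 0 < g1 := Nat.gcd_pos_of_pos_left _ hN0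
  have hg2pos : 0 < g2 := Nat.gcd_pos_of_pos_left _ hN0
  have hcop12 : Nat.Coprime g1 g2 := by
    have c1 : Nat.Coprime g1 e := Nat.Coprime.coprime_dvd_left (Nat.gcd_dvd_right _ _) hcop
    exact Nat.Coprime.coprime_dvd_right (Nat.gcd_dvd_right _ _) c1
  have hprod : g1 * g2 = N := by
    apply Nat.dvd_antisymm
    · exact Nat.Coprime.mul_dvd_of_dvd_of_dvd hcop12 (Nat.gcd_dvd_left _ _) (Nat.gcd_dvd_left _ _)
    · have hN' : N ∣ (q-1) * e := by rwa [mul_comm] at hNdvd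
      have h3 : Nat.gcd N ((q-1) * e) = N := Nat.gcd_eq_left hN'
      calc N = Nat.gcd N ((q-1)*e) := h3.symm
        _ ∣ g1 * g2 := gcd_mul_dvd_mul_gcd N (q-1) e
  rw [hm_eq, hd0, hordA]
  have hdiv1 : N / g1 = g2 := by
    rw [← hprod, Nat.mul_div_cancel_left _ hg1pos]
  have hdiv2 : N / g2 = g1 := by
    rw [← hprod, Nat.mul_div_cancel _ hg2pos]
  rw [hdiv1, hdiv2, mul_comm, hprod]
end AST



theorem orderOf_c_eq_m_mul_orderOf_a_pred (p : ℕ) [Fact p.Prime]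
    (c : ℕ → AlgebraicClosure (ZMod p))
    (hc : ∀ i, c i ^ p - c i = (∏ j ∈ Finset.range i, c j) ^ (p - 1))
    (i : ℕ) (m : ℕ) (hm : 0 < m)
    (hmem : c i ^ m ∈ Algebra.adjoin (ZMod p) {x | ∃ j < i, x = c j})
    (hmin : ∀ n : ℕ, 0 < n →
      c i ^ n ∈ Algebra.adjoin (ZMod p) {x | ∃ j < i, x = c j} → m ≤ n) :
    orderOf (c i) = m * orderOf ((∏ j ∈ Finset.range i, c j) ^ (p - 1)) := by
  exact AST.main (p := p) (c := c) hc i m hm hmem hmin
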